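/- Let (u*, λ*) be an eigenpair with u* > 0 entrywise, ‖u*‖ = 1, and 𝒜(u*)u* = λ* u*. Then J(u*, λ*) is a Z-matrix with J(u*,λ*)u* > 0 entrywise, J(u*,λ*) is invertible with entrywise nonnegative inverse, u*^T J(u*,λ*)^{-1} u* > 0, and the (n+1)×(n+1) block matrix F'(u*,λ*) = [[J(u*,λ*), −u*],[−u*^T, 0]] is invertible. -/

import Mathlib

open Matrix Finset

noncomputable def enorm' {n : ℕ} (u : Fin n → ℝ) : ℝ := Real.sqrt (∑ i, u i ^ 2)

def IsZMatrix {n : ℕ} (B : Matrix (Fin n) (Fin n) ℝ) : Prop :=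
  ∀ i j, i ≠ j → B i j ≤ 0

def IsIrreducibleMat {n : ℕ} (B : Matrix (Fin n) (Fin n) ℝ) : Prop :=
  ¬ ∃ S : Finset (Fin n), S.Nonempty ∧ S ≠ Finset.univ ∧
    ∀ i ∈ S, ∀ j ∉ S, B i j = 0

def IsNonsingularM {n : ℕ} (B : Matrix (Fin n) (Fin n) ℝ) : Prop :=
  IsZMatrix B ∧ IsUnit B ∧ ∀ i j, 0 ≤ B⁻¹ i j

noncomputable def calA {n : ℕ} (A : Matrix (Fin n) (Fin n) ℝ) (Γ : ℝ) (a : Fin n → ℝ)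
    (u : Fin n → ℝ) : Matrix (Fin n) (Fin n) ℝ :=
  A + Γ • Matrix.diagonal (fun i => 1 - 1 / (a i + u i ^ 2))

noncomputable def rvec {n : ℕ} (A : Matrix (Fin n) (Fin n) ℝ) (Γ : ℝ) (a : Fin n → ℝ)
    (u : Fin n → ℝ) (lam : ℝ) : Fin n → ℝ :=
  calA A Γ a u *ᵥ u - lam • u

noncomputable def Jmat {n : ℕ} (A : Matrix (Fin n) (Fin n) ℝ) (Γ : ℝ) (a : Fin n → ℝ)
    (u : Fin n → ℝ) (lam : ℝ) : Matrix (Fin n) (Fin n) ℝ :=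
  A + (Γ - lam) • (1 : Matrix (Fin n) (Fin n) ℝ)
    - Γ • Matrix.diagonal (fun i => (a i - u i ^ 2) / (a i + u i ^ 2) ^ 2)

noncomputable def lamOf {n : ℕ} [NeZero n] (A : Matrix (Fin n) (Fin n) ℝ) (Γ : ℝ)
    (a : Fin n → ℝ) (u : Fin n → ℝ) : ℝ :=
  ⨅ i, (calA A Γ a u *ᵥ u) i / u i

def NewtonSystem {n : ℕ} (A : Matrix (Fin n) (Fin n) ℝ) (Γ : ℝ) (a : Fin n → ℝ)
    (u : Fin n → ℝ) (lam : ℝ) (Δ : Fin n → ℝ) (δ : ℝ) : Prop :=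
  Jmat A Γ a u lam *ᵥ Δ - δ • u = -rvec A Γ a u lam ∧
  -(u ⬝ᵥ Δ) = -(1/2 * (u ⬝ᵥ u - 1))

/-- Monotonicity of Z-matrices possessing a positive vector with positive image. -/
lemma zmono_aux {n : ℕ} [NeZero n] (J : Matrix (Fin n) (Fin n) ℝ) (u : Fin n → ℝ)
    (hZ : IsZMatrix J) (hu : ∀ i, 0 < u i) (hJu : ∀ i, 0 < (J *ᵥ u) i)
    (x : Fin n → ℝ) (hx : ∀ i, 0 ≤ (J *ᵥ x) i) : ∀ i, 0 ≤ x i := by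
  obtain ⟨i0, -, hmin⟩ := Finset.exists_min_image Finset.univ (fun i => x i / u i)
    Finset.univ_nonempty
  set t := x i0 / u i0 with ht
  have hy : ∀ j, t * u j ≤ x j := by
    intro j
    have := hmin j (Finset.mem_univ j)
    rw [le_div_iff₀ (hu j)] at this
    exact this
  have htpos : 0 ≤ t := by
    by_contra hneg
    push_neg at hneg
    have h1 : 0 < (J *ᵥ (x - t • u)) i0 := by
      rw [Matrix.mulVec_sub, Matrix.mulVec_smul]
      have := hx i0
      have := hJu i0
      simp only [Pi.sub_apply, Pi.smul_apply, smul_eq_mul]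
      nlinarith
    have h2 : (J *ᵥ (x - t • u)) i0 ≤ 0 := by
      have hterm : ∀ j, J i0 j * (x j - t * u j) ≤ 0 := by
        intro j
        rcases eq_or_ne j i0 with rfl | hne
        · have hz : x j - t * u j = 0 := by
            rw [ht, div_mul_cancel₀ _ (hu j).ne', sub_self]
          rw [hz, mul_zero]
        · have h3 := hZ i0 j (Ne.symm hne)
          have h4 := hy j
          nlinarith
      calc (J *ᵥ (x - t • u)) i0 = ∑ j, J i0 j * (x j - t * u j) := by
            simp [Matrix.mulVec, dotProduct, smul_eq_mul]
        _ ≤ 0 := Finset.sum_nonpos fun j _ => hterm j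
    linarith
  intro i
  have := hy i
  nlinarith [hu i]

theorem stmt_16 {n : ℕ} (A : Matrix (Fin n) (Fin n) ℝ) (a : Fin n → ℝ) (Γ : ℝ)
    (ha : ∀ i, 0 < a i) (hΓ : 0 < Γ)
    (hA : IsNonsingularM A) (hAirr : IsIrreducibleMat A)
    (ustar : Fin n → ℝ) (lamstar : ℝ)
    (hu : ∀ i, 0 < ustar i) (hnorm : enorm' ustar = 1)
    (heig : calA A Γ a ustar *ᵥ ustar = lamstar • ustar) :
    IsZMatrix (Jmat A Γ a ustar lamstar) ∧
    (∀ i, 0 < (Jmat A Γ a ustar lamstar *ᵥ ustar) i) ∧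
    IsUnit (Jmat A Γ a ustar lamstar) ∧
    (∀ i j, 0 ≤ (Jmat A Γ a ustar lamstar)⁻¹ i j) ∧
    0 < ustar ⬝ᵥ ((Jmat A Γ a ustar lamstar)⁻¹ *ᵥ ustar) ∧
    IsUnit (Matrix.fromBlocks (Jmat A Γ a ustar lamstar)
      (Matrix.replicateCol (Fin 1) (-ustar)) (Matrix.replicateRow (Fin 1) (-ustar)) 0) := by
  haveI hn : NeZero n := ⟨by rintro rfl; simp [enorm'] at hnorm⟩
  set J := Jmat A Γ a ustar lamstar with hJdef
  have hs : ∀ i, 0 < a i + ustar i ^ 2 := fun i => by have := ha i; positivity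
  -- Z-matrix
  have hZ : IsZMatrix J := by
    intro i j hij
    have := hA.1 i j hij
    simp only [hJdef, Jmat, Matrix.sub_apply, Matrix.add_apply, Matrix.smul_apply,
      Matrix.one_apply_ne hij, Matrix.diagonal_apply_ne _ hij, smul_eq_mul,
      mul_zero, add_zero, sub_zero]
    linarith
  -- J u formula
  have hAu : ∀ i, (A *ᵥ ustar) i
      = lamstar * ustar i - Γ * ((1 - 1 / (a i + ustar i ^ 2)) * ustar i) := by
    intro i
    have h := congrFun heig i
    simp only [calA, Matrix.add_mulVec, Matrix.smul_mulVec, Matrix.mulVec_diagonal,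
      Pi.add_apply, Pi.smul_apply, smul_eq_mul] at h
    linarith
  have hJu : ∀ i, (J *ᵥ ustar) i = 2 * Γ * ustar i ^ 3 / (a i + ustar i ^ 2) ^ 2 := by
    intro i
    simp only [hJdef, Jmat, Matrix.sub_mulVec, Matrix.add_mulVec, Matrix.smul_mulVec,
      Matrix.one_mulVec, Matrix.mulVec_diagonal, Pi.sub_apply, Pi.add_apply, Pi.smul_apply,
      smul_eq_mul]
    rw [hAu i]
    have := hs i
    field_simp
    ring
  have hJupos : ∀ i, 0 < (J *ᵥ ustar) i := by
    intro i
    rw [hJu i]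
    have h1 := hs i
    have h2 := hu i
    positivity
  -- invertibility
  have hdet : J.det ≠ 0 := by
    intro h0
    obtain ⟨v, hv, hJv⟩ := (Matrix.exists_mulVec_eq_zero_iff).mpr h0
    have h1 := zmono_aux J ustar hZ hu hJupos v (by rw [hJv]; intro i; exact le_refl 0)
    have h2 := zmono_aux J ustar hZ hu hJupos (-v)
      (by rw [Matrix.mulVec_neg, hJv]; intro i; simp)
    apply hv
    funext i
    have h3 := h1 i
    have h4 := h2 i
    simp only [Pi.neg_apply] at h4
    have : v i = 0 := le_antisymm (by linarith) h3
    simpa using this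
  have hdu : IsUnit J.det := isUnit_iff_ne_zero.mpr hdet
  have hUnit : IsUnit J := (Matrix.isUnit_iff_isUnit_det J).mpr hdu
  -- inverse nonneg
  have hinvn : ∀ i j, 0 ≤ J⁻¹ i j := by
    intro i j
    have hcol : J *ᵥ (J⁻¹ *ᵥ Pi.single j 1) = Pi.single j 1 := by
      rw [Matrix.mulVec_mulVec, Matrix.mul_nonsing_inv _ hdu, Matrix.one_mulVec]
    have h1 := zmono_aux J ustar hZ hu hJupos (J⁻¹ *ᵥ Pi.single j 1)
      (by rw [hcol]; intro k; by_cases h : k = j <;> simp [Pi.single_apply, h])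
    have h2 := h1 i
    have h3 : (J⁻¹ *ᵥ Pi.single j 1) i = J⁻¹ i j := by
      simp [Matrix.mulVec, dotProduct, Pi.single_apply, mul_ite]
    rwa [h3] at h2
  -- dot product positive
  set y := J⁻¹ *ᵥ ustar with hydef
  have hJy : J *ᵥ y = ustar := by
    rw [hydef, Matrix.mulVec_mulVec, Matrix.mul_nonsing_inv _ hdu, Matrix.one_mulVec]
  have hynn : ∀ i, 0 ≤ y i :=
    zmono_aux J ustar hZ hu hJupos y (by rw [hJy]; intro i; exact (hu i).le)
  have hdot : 0 < ustar ⬝ᵥ y := by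
    by_cases hyz : y = 0
    · exfalso
      have i0 : Fin n := ⟨0, Nat.pos_of_ne_zero (NeZero.ne n)⟩
      have := congrFun hJy i0
      rw [hyz, Matrix.mulVec_zero] at this
      have := hu i0
      simp_all
    · obtain ⟨i1, hi1⟩ : ∃ i, y i ≠ 0 := by
        by_contra h
        push_neg at h
        exact hyz (funext h)
      have hi1' : 0 < y i1 := lt_of_le_of_ne (hynn i1) (Ne.symm hi1)
      refine Finset.sum_pos' (fun i _ => mul_nonneg (hu i).le (hynn i)) ⟨i1, Finset.mem_univ i1, ?_⟩
      exact mul_pos (hu i1) hi1'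
  -- block matrix
  haveI : Invertible J := J.invertibleOfIsUnitDet hdu
  have hblock : IsUnit (Matrix.fromBlocks J (Matrix.replicateCol (Fin 1) (-ustar))
      (Matrix.replicateRow (Fin 1) (-ustar)) 0) := by
    rw [Matrix.isUnit_iff_isUnit_det, Matrix.det_fromBlocks₁₁]
    refine hdu.mul (isUnit_iff_ne_zero.mpr ?_)
    have hentry : ((0 : Matrix (Fin 1) (Fin 1) ℝ)
        - Matrix.replicateRow (Fin 1) (-ustar) * ⅟J * Matrix.replicateCol (Fin 1) (-ustar)) 0 0
        = -(ustar ⬝ᵥ y) := by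
      rw [Matrix.invOf_eq_nonsing_inv]
      simp only [Matrix.sub_apply, Matrix.zero_apply, Matrix.mul_apply, Matrix.replicateRow_apply,
        Matrix.replicateCol_apply, Pi.neg_apply, dotProduct, hydef, Matrix.mulVec,
        dotProduct, Finset.sum_mul, Finset.mul_sum]
      rw [zero_sub, neg_inj]
      rw [Finset.sum_comm]
      congr 1
      funext k
      congr 1
      funext l
      ring
    rw [Matrix.det_fin_one, hentry]
    linarith
  exact ⟨hZ, hJupos, hUnit, hinvn, hdot, hblock⟩
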